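/- Let F̂(η) = (1/t) log f(w_{t,η}) be the log-transformed meta objective and let η* ∈ [1/L, 1/α] be its unique stationary point on [0,∞). Then for every M̂ ≥ 2/α and every ε with 0 < ε < 1/L, and for every η ∈ [0, η* − ε] ∪ [η* + ε, M̂], one has |F̂'(η)| ≥ 2ε c_min² min(α³/L, 1/M̂²). -/

import Mathlib

private lemma aux_pow1 {a b : ℝ} (m : ℕ) (ha : 0 ≤ a) (hab : a ≤ b) :
    (b - a) * a ^ m ≤ b ^ (m + 1) - a ^ (m + 1) := by
  have h1 : a ^ m ≤ b ^ m := pow_le_pow_left₀ ha hab m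
  have hb : 0 ≤ b := ha.trans hab
  have h3 : b * a ^ m ≤ b * b ^ m := mul_le_mul_of_nonneg_left h1 hb
  calc (b - a) * a ^ m = b * a ^ m - a * a ^ m := by ring
    _ ≤ b * b ^ m - a * a ^ m := by linarith
    _ = b ^ (m + 1) - a ^ (m + 1) := by ring

private lemma aux_pow2 {a b : ℝ} (m : ℕ) (ha : 0 ≤ a) (hab : a ≤ b) :
    (b - a) * b ^ m ≤ b ^ (m + 1) - a ^ (m + 1) := by
  have h1 : a ^ m ≤ b ^ m := pow_le_pow_left₀ ha hab m
  have h3 : a * a ^ m ≤ a * b ^ m := mul_le_mul_of_nonneg_left h1 ha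
  calc (b - a) * b ^ m = b * b ^ m - a * b ^ m := by ring
    _ ≤ b * b ^ m - a * a ^ m := by linarith
    _ = b ^ (m + 1) - a ^ (m + 1) := by ring

/-- pointwise bound when the "current" point `p` is the smaller one. -/
private lemma keyA (t : ℕ) (ht : 1 ≤ t) (α lam ε M p q : ℝ)
    (hα : 0 < α) (hαl : α ≤ lam) (hε : 0 < ε) (hεα : ε * α ≤ 1)
    (hαM : 2 ≤ α * M) (hp : 0 ≤ p) (hpM : p ≤ M) (hpq : p + ε ≤ q) :
    ε * min (α ^ 2) (1 / M ^ 2) * (1 - p * lam) ^ (2 * t) ≤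
      lam * ((1 - p * lam) ^ (2 * t - 1) - (1 - q * lam) ^ (2 * t - 1)) := by
  obtain ⟨m, rfl⟩ : ∃ m, t = m + 1 := ⟨t - 1, by omega⟩
  have e1 : 2 * (m + 1) - 1 = 2 * m + 1 := by omega
  have e2 : 2 * (m + 1) = 2 * m + 2 := by omega
  rw [e1, e2]
  have hlam : 0 < lam := lt_of_lt_of_le hα hαl
  have hM : 0 < M := by nlinarith
  set κ := ε * min (α ^ 2) (1 / M ^ 2) with hκ
  have hκ1 : κ ≤ ε * α ^ 2 := by
    have := min_le_left (α ^ 2) (1 / M ^ 2); nlinarith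
  have hκ2 : κ ≤ ε * (1 / M ^ 2) := by
    have := min_le_right (α ^ 2) (1 / M ^ 2); nlinarith
  have hκ0 : 0 ≤ κ := by positivity
  have hκα : κ ≤ α := by
    have h1 : κ ≤ (ε * α) * α := by
      have : ε * α ^ 2 = (ε * α) * α := by ring
      linarith [hκ1, this ▸ hκ1]
    have h2 : (ε * α) * α ≤ 1 * α := mul_le_mul_of_nonneg_right hεα hα.le
    linarith
  have hεl : ε * α ^ 2 ≤ ε * lam ^ 2 := by
    have := pow_le_pow_left₀ hα.le hαl 2
    exact mul_le_mul_of_nonneg_left this hε.le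
  set u := 1 - p * lam with hu
  set v := 1 - q * lam with hv
  have hεlam : 0 < ε * lam := mul_pos hε hlam
  have huv : v ≤ u - ε * lam := by
    simp only [hu, hv]
    have : (q - p) * lam ≥ ε * lam := by
      apply mul_le_mul_of_nonneg_right _ hlam.le; linarith
    nlinarith
  have hu1 : u ≤ 1 := by
    have : 0 ≤ p * lam := mul_nonneg hp hlam.le
    simp only [hu]; linarith
  rcases le_or_gt u 0 with h0 | h0
  · -- u ≤ 0, both negative
    have ha : (0:ℝ) ≤ -u := by linarith
    have hab : -u ≤ -v := by linarith
    have haM : -u ≤ M * lam := by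
      have : p * lam ≤ M * lam := mul_le_mul_of_nonneg_right hpM hlam.le
      simp only [hu]; linarith
    have key := aux_pow1 (2 * m) ha hab
    have hκa : κ * (-u) ^ 2 ≤ ε * lam ^ 2 := by
      have h4 : (-u) ^ 2 ≤ (M * lam) ^ 2 := pow_le_pow_left₀ ha haM 2
      calc κ * (-u) ^ 2 ≤ (ε * (1 / M ^ 2)) * (M * lam) ^ 2 :=
            mul_le_mul hκ2 h4 (by positivity) (by positivity)
        _ = ε * lam ^ 2 := by field_simp
    have hou : u ^ (2 * m + 1) = -(-u) ^ (2 * m + 1) := by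
      rw [Odd.neg_pow ⟨m, rfl⟩]; ring
    have hov : v ^ (2 * m + 1) = -(-v) ^ (2 * m + 1) := by
      rw [Odd.neg_pow ⟨m, rfl⟩]; ring
    have heu : u ^ (2 * m + 2) = (-u) ^ (2 * m + 2) := by
      rw [Even.neg_pow ⟨m + 1, by ring⟩]
    rw [hou, hov, heu]
    have hpnn : (0:ℝ) ≤ (-u) ^ (2 * m) := pow_nonneg ha _
    have h5 : ε * lam * (-u) ^ (2 * m) ≤ (-v) ^ (2 * m + 1) - (-u) ^ (2 * m + 1) := by
      have h6 : ε * lam ≤ (-v) - (-u) := by linarith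
      have h7 := mul_le_mul_of_nonneg_right h6 hpnn
      linarith [key]
    calc κ * (-u) ^ (2 * m + 2) = (κ * (-u) ^ 2) * (-u) ^ (2 * m) := by ring
      _ ≤ (ε * lam ^ 2) * (-u) ^ (2 * m) := mul_le_mul_of_nonneg_right hκa hpnn
      _ = lam * (ε * lam * (-u) ^ (2 * m)) := by ring
      _ ≤ lam * ((-v) ^ (2 * m + 1) - (-u) ^ (2 * m + 1)) :=
            mul_le_mul_of_nonneg_left h5 hlam.le
      _ = lam * (-(-u) ^ (2 * m + 1) - -(-v) ^ (2 * m + 1)) := by ring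
  · rcases le_or_gt 0 v with h1 | h1
    · -- 0 ≤ v < u
      have hvu : v ≤ u := by linarith
      have key := aux_pow2 (2 * m) h1 hvu
      have hpnn : (0:ℝ) ≤ u ^ (2 * m) := pow_nonneg h0.le _
      have hκa : κ * u ^ 2 ≤ ε * lam ^ 2 := by
        have h4 : u ^ 2 ≤ 1 := pow_le_one₀ h0.le hu1
        have h5 : κ * u ^ 2 ≤ (ε * α ^ 2) * 1 :=
          mul_le_mul hκ1 h4 (sq_nonneg u) (by positivity)
        linarith
      have h5 : ε * lam * u ^ (2 * m) ≤ u ^ (2 * m + 1) - v ^ (2 * m + 1) := by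
        have h6 : ε * lam ≤ u - v := by linarith
        have h7 := mul_le_mul_of_nonneg_right h6 hpnn
        linarith [key]
      calc κ * u ^ (2 * m + 2) = (κ * u ^ 2) * u ^ (2 * m) := by ring
        _ ≤ (ε * lam ^ 2) * u ^ (2 * m) := mul_le_mul_of_nonneg_right hκa hpnn
        _ = lam * (ε * lam * u ^ (2 * m)) := by ring
        _ ≤ lam * (u ^ (2 * m + 1) - v ^ (2 * m + 1)) :=
              mul_le_mul_of_nonneg_left h5 hlam.le
    · -- v < 0 < u
      have hvn : v ^ (2 * m + 1) ≤ 0 := Odd.pow_nonpos ⟨m, rfl⟩ h1.le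
      have hun : (0:ℝ) ≤ u ^ (2 * m + 1) := pow_nonneg h0.le _
      have hκl : κ * u ≤ lam := by
        have h2 : κ * u ≤ κ * 1 := mul_le_mul_of_nonneg_left hu1 hκ0
        linarith
      calc κ * u ^ (2 * m + 2) = (κ * u) * u ^ (2 * m + 1) := by ring
        _ ≤ lam * u ^ (2 * m + 1) := mul_le_mul_of_nonneg_right hκl hun
        _ ≤ lam * (u ^ (2 * m + 1) - v ^ (2 * m + 1)) :=
              mul_le_mul_of_nonneg_left (by linarith) hlam.le

/-- pointwise bound when the "current" point `q` is the larger one. -/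
private lemma keyB (t : ℕ) (ht : 1 ≤ t) (α lam ε M p q : ℝ)
    (hα : 0 < α) (hαl : α ≤ lam) (hε : 0 < ε) (hεα : ε * α ≤ 1)
    (hαM : 2 ≤ α * M) (hp : 0 ≤ p) (hqM : q ≤ M) (hpq : p + ε ≤ q) :
    ε * min (α ^ 2) (1 / M ^ 2) * (1 - q * lam) ^ (2 * t) ≤
      lam * ((1 - p * lam) ^ (2 * t - 1) - (1 - q * lam) ^ (2 * t - 1)) := by
  obtain ⟨m, rfl⟩ : ∃ m, t = m + 1 := ⟨t - 1, by omega⟩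
  have e1 : 2 * (m + 1) - 1 = 2 * m + 1 := by omega
  have e2 : 2 * (m + 1) = 2 * m + 2 := by omega
  rw [e1, e2]
  have hlam : 0 < lam := lt_of_lt_of_le hα hαl
  have hM : 0 < M := by nlinarith
  have hεM : ε ≤ M := by nlinarith
  set κ := ε * min (α ^ 2) (1 / M ^ 2) with hκ
  have hκ1 : κ ≤ ε * α ^ 2 := by
    have := min_le_left (α ^ 2) (1 / M ^ 2); nlinarith
  have hκ2 : κ ≤ ε * (1 / M ^ 2) := by
    have := min_le_right (α ^ 2) (1 / M ^ 2); nlinarith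
  have hκ0 : 0 ≤ κ := by positivity
  have hεl : ε * α ^ 2 ≤ ε * lam ^ 2 := by
    have := pow_le_pow_left₀ hα.le hαl 2
    exact mul_le_mul_of_nonneg_left this hε.le
  set u := 1 - p * lam with hu
  set v := 1 - q * lam with hv
  have hεlam : 0 < ε * lam := mul_pos hε hlam
  have huv : v ≤ u - ε * lam := by
    simp only [hu, hv]
    have : (q - p) * lam ≥ ε * lam := by
      apply mul_le_mul_of_nonneg_right _ hlam.le; linarith
    nlinarith
  have hu1 : u ≤ 1 := by
    have : 0 ≤ p * lam := mul_nonneg hp hlam.le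
    simp only [hu]; linarith
  rcases le_or_gt 0 v with h1 | h1
  · -- 0 ≤ v < u ≤ 1
    have hvu : v ≤ u := by linarith
    have key := aux_pow1 (2 * m) h1 hvu
    have hpnn : (0:ℝ) ≤ v ^ (2 * m) := pow_nonneg h1 _
    have hκa : κ * v ^ 2 ≤ ε * lam ^ 2 := by
      have h4 : v ^ 2 ≤ 1 := pow_le_one₀ h1 (by linarith)
      have h5 : κ * v ^ 2 ≤ (ε * α ^ 2) * 1 :=
        mul_le_mul hκ1 h4 (sq_nonneg v) (by positivity)
      linarith
    have h5 : ε * lam * v ^ (2 * m) ≤ u ^ (2 * m + 1) - v ^ (2 * m + 1) := by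
      have h6 : ε * lam ≤ u - v := by linarith
      have h7 := mul_le_mul_of_nonneg_right h6 hpnn
      linarith [key]
    calc κ * v ^ (2 * m + 2) = (κ * v ^ 2) * v ^ (2 * m) := by ring
      _ ≤ (ε * lam ^ 2) * v ^ (2 * m) := mul_le_mul_of_nonneg_right hκa hpnn
      _ = lam * (ε * lam * v ^ (2 * m)) := by ring
      _ ≤ lam * (u ^ (2 * m + 1) - v ^ (2 * m + 1)) :=
            mul_le_mul_of_nonneg_left h5 hlam.le
  · -- v < 0
    have hq0 : 0 ≤ q := by linarith
    have hbM : -v ≤ M * lam := by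
      have : q * lam ≤ M * lam := mul_le_mul_of_nonneg_right hqM hlam.le
      simp only [hv]; linarith
    have hb : (0:ℝ) < -v := by linarith
    have hov : v ^ (2 * m + 1) = -(-v) ^ (2 * m + 1) := by
      rw [Odd.neg_pow ⟨m, rfl⟩]; ring
    have hev : v ^ (2 * m + 2) = (-v) ^ (2 * m + 2) := by
      rw [Even.neg_pow ⟨m + 1, by ring⟩]
    rcases le_or_gt u 0 with h0 | h0
    · -- v < u ≤ 0
      have ha : (0:ℝ) ≤ -u := by linarith
      have hab : -u ≤ -v := by linarith
      have key := aux_pow2 (2 * m) ha hab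
      have hpnn : (0:ℝ) ≤ (-v) ^ (2 * m) := pow_nonneg hb.le _
      have hκa : κ * (-v) ^ 2 ≤ ε * lam ^ 2 := by
        have h4 : (-v) ^ 2 ≤ (M * lam) ^ 2 := pow_le_pow_left₀ hb.le hbM 2
        calc κ * (-v) ^ 2 ≤ (ε * (1 / M ^ 2)) * (M * lam) ^ 2 :=
              mul_le_mul hκ2 h4 (by positivity) (by positivity)
          _ = ε * lam ^ 2 := by field_simp
      have hou : u ^ (2 * m + 1) = -(-u) ^ (2 * m + 1) := by
        rw [Odd.neg_pow ⟨m, rfl⟩]; ring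
      rw [hou, hov, hev]
      have h5 : ε * lam * (-v) ^ (2 * m) ≤ (-v) ^ (2 * m + 1) - (-u) ^ (2 * m + 1) := by
        have h6 : ε * lam ≤ (-v) - (-u) := by linarith
        have h7 := mul_le_mul_of_nonneg_right h6 hpnn
        linarith [key]
      calc κ * (-v) ^ (2 * m + 2) = (κ * (-v) ^ 2) * (-v) ^ (2 * m) := by ring
        _ ≤ (ε * lam ^ 2) * (-v) ^ (2 * m) := mul_le_mul_of_nonneg_right hκa hpnn
        _ = lam * (ε * lam * (-v) ^ (2 * m)) := by ring
        _ ≤ lam * ((-v) ^ (2 * m + 1) - (-u) ^ (2 * m + 1)) :=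
              mul_le_mul_of_nonneg_left h5 hlam.le
        _ = lam * (-(-u) ^ (2 * m + 1) - -(-v) ^ (2 * m + 1)) := by ring
    · -- v < 0 < u
      have hun : (0:ℝ) ≤ u ^ (2 * m + 1) := pow_nonneg h0.le _
      rw [hov, hev]
      have hbnn : (0:ℝ) ≤ (-v) ^ (2 * m + 1) := pow_nonneg hb.le _
      have hκl : κ * (-v) ≤ lam := by
        have h2 : κ * (-v) ≤ (ε * (1 / M ^ 2)) * (M * lam) :=
          mul_le_mul hκ2 hbM hb.le (by positivity)
        have h3 : (ε * (1 / M ^ 2)) * (M * lam) = (ε / M) * lam := by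
          field_simp
        have h4 : (ε / M) * lam ≤ 1 * lam := by
          apply mul_le_mul_of_nonneg_right _ hlam.le
          rw [div_le_one hM]; exact hεM
        calc κ * (-v) ≤ ε * (1 / M ^ 2) * (M * lam) := h2
          _ = (ε / M) * lam := h3
          _ ≤ 1 * lam := h4
          _ = lam := one_mul lam
      calc κ * (-v) ^ (2 * m + 2) = (κ * (-v)) * (-v) ^ (2 * m + 1) := by ring
        _ ≤ lam * (-v) ^ (2 * m + 1) := mul_le_mul_of_nonneg_right hκl hbnn
        _ ≤ lam * (u ^ (2 * m + 1) - -(-v) ^ (2 * m + 1)) :=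
              mul_le_mul_of_nonneg_left (by linarith) hlam.le


/-- For the log-transformed meta objective `F̂(η) = (1/t) log f(w_{t,η})`
with unique stationary point `η* ∈ [1/L, 1/α]` on `[0,∞)`: for every `M̂ ≥ 2/α` and every
`0 < ε < 1/L`, and every `η ∈ [0, η* − ε] ∪ [η* + ε, M̂]`, one has
`|F̂'(η)| ≥ 2ε c_min² min(α³/L, 1/M̂²)`. -/
theorem stmt4 (d t : ℕ) (hd : 2 ≤ d) (ht : 1 ≤ t)
    (lam c : Fin d → ℝ)
    (hpos : ∀ i, 0 < lam i)
    (hdec : ∀ i j : Fin d, i ≤ j → lam j ≤ lam i)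
    (L α : ℝ)
    (hLdef : L = lam ⟨0, by omega⟩)
    (hadef : α = lam ⟨d - 1, by omega⟩)
    (hgap : α < L)
    (hcnorm : ∑ i, c i ^ 2 = 1)
    (cmin : ℝ)
    (hcmindef : cmin = min |c ⟨0, by omega⟩| |c ⟨d - 1, by omega⟩|)
    (hcmin : 0 < cmin)
    (F : ℝ → ℝ)
    (hF : ∀ η : ℝ,
      F η = (1 / (t : ℝ)) *
        Real.log ((1 / 2) * ∑ i, c i ^ 2 * lam i * (1 - η * lam i) ^ (2 * t)))
    (ηstar : ℝ)
    (hηstar_range : 1 / L ≤ ηstar ∧ ηstar ≤ 1 / α)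
    (hηstar_stat : deriv F ηstar = 0) :
    ∀ M ε : ℝ, 2 / α ≤ M → 0 < ε → ε < 1 / L →
      ∀ η : ℝ, η ∈ Set.Icc 0 (ηstar - ε) ∪ Set.Icc (ηstar + ε) M →
        2 * ε * cmin ^ 2 * min (α ^ 3 / L) (1 / M ^ 2) ≤ |deriv F η| := by
  obtain ⟨hηs1, hηs2⟩ := hηstar_range
  have hL : 0 < L := hLdef ▸ hpos _
  have hα : 0 < α := hadef ▸ hpos _
  have hαl : ∀ i : Fin d, α ≤ lam i := by
    intro i
    rw [hadef]
    apply hdec i ⟨d - 1, by omega⟩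
    rw [Fin.le_def]
    exact Nat.le_pred_of_lt i.isLt
  have hc0 : c ⟨0, by omega⟩ ≠ 0 := by
    have h1 : cmin ≤ |c ⟨0, by omega⟩| := hcmindef ▸ min_le_left _ _
    have := abs_pos.mp (lt_of_lt_of_le hcmin h1)
    exact this
  have hcd : c ⟨d - 1, by omega⟩ ≠ 0 := by
    have h1 : cmin ≤ |c ⟨d - 1, by omega⟩| := hcmindef ▸ min_le_right _ _
    exact abs_pos.mp (lt_of_lt_of_le hcmin h1)
  set G : ℝ → ℝ := fun x => (1 / 2 : ℝ) * ∑ i, c i ^ 2 * lam i * (1 - x * lam i) ^ (2 * t)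
    with hGdef
  set N : ℝ → ℝ := fun x => ∑ i, c i ^ 2 * lam i ^ 2 * (1 - x * lam i) ^ (2 * t - 1)
    with hNdef
  clear_value G N
  -- positivity of G
  have hGpos : ∀ x : ℝ, 0 < G x := by
    intro x
    have hnn : ∀ i ∈ Finset.univ, (0:ℝ) ≤ c i ^ 2 * lam i * (1 - x * lam i) ^ (2 * t) := by
      intro i _
      have h2 : (0:ℝ) ≤ (1 - x * lam i) ^ (2 * t) := by
        rw [pow_mul]; positivity
      have := (hpos i).le
      positivity
    have hex : ∃ i ∈ Finset.univ, (0:ℝ) < c i ^ 2 * lam i * (1 - x * lam i) ^ (2 * t) := by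
      by_cases hzero : 1 - x * lam ⟨0, by omega⟩ = 0
      · refine ⟨⟨d - 1, by omega⟩, Finset.mem_univ _, ?_⟩
        have hxL : x * L = 1 := by rw [hLdef]; linarith
        have hbase : 0 < 1 - x * lam ⟨d - 1, by omega⟩ := by
          rw [← hadef]
          have hx : x = 1 / L := by field_simp at hxL ⊢; linarith
          rw [hx]
          have : 1 / L * α < 1 := by
            rw [div_mul_eq_mul_div, mul_comm, ← div_mul_eq_mul_div, mul_one]
            exact (div_lt_one hL).mpr hgap
          linarith
        exact mul_pos (mul_pos (pow_two_pos_of_ne_zero hcd) (hpos _)) (pow_pos hbase _)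
      · refine ⟨⟨0, by omega⟩, Finset.mem_univ _, ?_⟩
        have hbase : (0:ℝ) < (1 - x * lam ⟨0, by omega⟩) ^ (2 * t) := by
          rw [pow_mul]
          exact pow_pos (pow_two_pos_of_ne_zero hzero) t
        exact mul_pos (mul_pos (pow_two_pos_of_ne_zero hc0) (hpos _)) hbase
    have hsum : (0:ℝ) < ∑ i, c i ^ 2 * lam i * (1 - x * lam i) ^ (2 * t) :=
      Finset.sum_pos' hnn hex
    simp only [hGdef]
    linarith
  -- derivative of G
  have hG' : ∀ x : ℝ, HasDerivAt G (-(t : ℝ) * N x) x := by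
    intro x
    have hsum : HasDerivAt
        (fun y : ℝ => ∑ i, c i ^ 2 * lam i * (1 - y * lam i) ^ (2 * t))
        (∑ i, c i ^ 2 * lam i * (((2 * t : ℕ) : ℝ) * (1 - x * lam i) ^ (2 * t - 1) * (-lam i)))
        x := by
      apply HasDerivAt.fun_sum
      intro i _
      have hb : HasDerivAt (fun y : ℝ => 1 - y * lam i) (-lam i) x := by
        simpa using ((hasDerivAt_id x).mul_const (lam i)).const_sub 1
      exact (hb.pow (2 * t)).const_mul (c i ^ 2 * lam i)
    have h2 := hsum.const_mul (1 / 2 : ℝ)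
    have heq : -(t : ℝ) * N x =
        (1 / 2 : ℝ) * ∑ i, c i ^ 2 * lam i *
          (((2 * t : ℕ) : ℝ) * (1 - x * lam i) ^ (2 * t - 1) * (-lam i)) := by
      simp only [hNdef]
      rw [Finset.mul_sum, Finset.mul_sum]
      apply Finset.sum_congr rfl
      intro i _
      push_cast
      ring
    simp only [hGdef]
    rw [heq]
    exact h2
  have ht0 : (t : ℝ) ≠ 0 := Nat.cast_ne_zero.mpr (by omega)
  have hFd : ∀ x : ℝ, deriv F x = -(N x) / G x := by
    intro x
    have hFh : HasDerivAt F ((1 / (t : ℝ)) * ((-(t : ℝ) * N x) / G x)) x := by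
      have hFe : F = fun y => (1 / (t : ℝ)) * Real.log (G y) := by
        funext y; rw [hF y]; simp only [hGdef]
      rw [hFe]
      exact ((hG' x).log (hGpos x).ne').const_mul _
    rw [hFh.deriv]
    have hGne := (hGpos x).ne'
    field_simp
  have hN0 : N ηstar = 0 := by
    have h := hηstar_stat
    rw [hFd ηstar] at h
    have h2 := (div_eq_zero_iff.mp h).resolve_right (hGpos ηstar).ne'
    linarith
  intro M ε hM2 hε hεL η hη
  have hαM : 2 ≤ α * M := by
    rw [div_le_iff₀ hα] at hM2; linarith
  have hεα1 : ε * α ≤ 1 := by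
    have h1 : ε * α ≤ ε * L := mul_le_mul_of_nonneg_left hgap.le hε.le
    have h2 : ε * L < 1 := by
      rw [lt_div_iff₀ hL] at hεL; linarith
    linarith
  have hM0 : 0 < M := by nlinarith
  have h1αM : 1 / α ≤ M := by
    rw [div_le_iff₀ hα]; nlinarith
  have hηs0 : 0 ≤ ηstar := le_trans (by positivity) hηs1
  have hmin2 : (0:ℝ) ≤ min (α ^ 2) (1 / M ^ 2) := le_min (by positivity) (by positivity)
  have hmin10 : (0:ℝ) ≤ min (α ^ 3 / L) (1 / M ^ 2) := le_min (by positivity) (by positivity)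
  have hmin1le : min (α ^ 3 / L) (1 / M ^ 2) ≤ min (α ^ 2) (1 / M ^ 2) := by
    apply min_le_min _ le_rfl
    rw [div_le_iff₀ hL]
    nlinarith
  have hcm1 : cmin ^ 2 ≤ 1 := by
    have h1 : cmin ≤ |c ⟨0, by omega⟩| := hcmindef ▸ min_le_left _ _
    have h2 : cmin ^ 2 ≤ |c ⟨0, by omega⟩| ^ 2 := pow_le_pow_left₀ hcmin.le h1 2
    rw [sq_abs] at h2
    have h3 : c ⟨0, by omega⟩ ^ 2 ≤ ∑ i, c i ^ 2 :=
      Finset.single_le_sum (fun i _ => sq_nonneg (c i)) (Finset.mem_univ _)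
    rw [hcnorm] at h3; linarith
  have hfinal : 2 * ε * cmin ^ 2 * min (α ^ 3 / L) (1 / M ^ 2) ≤
      2 * (ε * min (α ^ 2) (1 / M ^ 2)) := by
    have e1 : 2 * ε * cmin ^ 2 * min (α ^ 3 / L) (1 / M ^ 2) ≤
        2 * ε * 1 * min (α ^ 3 / L) (1 / M ^ 2) := by
      apply mul_le_mul_of_nonneg_right _ hmin10
      nlinarith
    have e2 : 2 * ε * 1 * min (α ^ 3 / L) (1 / M ^ 2) ≤
        2 * ε * 1 * min (α ^ 2) (1 / M ^ 2) := by
      apply mul_le_mul_of_nonneg_left hmin1le (by linarith)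
    linarith
  rcases hη with ⟨hη0, hη1⟩ | ⟨hη2, hη3⟩
  · -- left of ηstar
    have hηM : η ≤ M := by
      have : η ≤ 1 / α := by linarith
      linarith
    have hterm : ∀ i ∈ Finset.univ,
        (ε * min (α ^ 2) (1 / M ^ 2)) * (c i ^ 2 * lam i * (1 - η * lam i) ^ (2 * t)) ≤
        c i ^ 2 * lam i ^ 2 * (1 - η * lam i) ^ (2 * t - 1) -
          c i ^ 2 * lam i ^ 2 * (1 - ηstar * lam i) ^ (2 * t - 1) := by
      intro i _
      have key := keyA t ht α (lam i) ε M η ηstar hα (hαl i) hε hεα1 hαM hη0 hηM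
        (by linarith)
      have h8 := mul_le_mul_of_nonneg_left key (mul_nonneg (sq_nonneg (c i)) (hpos i).le)
      calc (ε * min (α ^ 2) (1 / M ^ 2)) * (c i ^ 2 * lam i * (1 - η * lam i) ^ (2 * t))
          = (c i ^ 2 * lam i) *
            ((ε * min (α ^ 2) (1 / M ^ 2)) * (1 - η * lam i) ^ (2 * t)) := by ring
        _ ≤ (c i ^ 2 * lam i) *
            (lam i * ((1 - η * lam i) ^ (2 * t - 1) - (1 - ηstar * lam i) ^ (2 * t - 1))) := h8
        _ = c i ^ 2 * lam i ^ 2 * (1 - η * lam i) ^ (2 * t - 1) -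
            c i ^ 2 * lam i ^ 2 * (1 - ηstar * lam i) ^ (2 * t - 1) := by ring
    have hsum : (ε * min (α ^ 2) (1 / M ^ 2)) * (2 * G η) ≤ N η - N ηstar := by
      have e0 : (2:ℝ) * G η = ∑ i, c i ^ 2 * lam i * (1 - η * lam i) ^ (2 * t) := by
        simp only [hGdef]; ring
      have e : (ε * min (α ^ 2) (1 / M ^ 2)) * (2 * G η) =
          ∑ i, (ε * min (α ^ 2) (1 / M ^ 2)) *
            (c i ^ 2 * lam i * (1 - η * lam i) ^ (2 * t)) := by
        rw [e0, Finset.mul_sum]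
      rw [e]
      have e2 : N η - N ηstar = ∑ i,
          (c i ^ 2 * lam i ^ 2 * (1 - η * lam i) ^ (2 * t - 1) -
           c i ^ 2 * lam i ^ 2 * (1 - ηstar * lam i) ^ (2 * t - 1)) := by
        simp only [hNdef]
        rw [Finset.sum_sub_distrib]
      rw [e2]
      exact Finset.sum_le_sum hterm
    have hGp := hGpos η
    have hNlb : 2 * (ε * min (α ^ 2) (1 / M ^ 2)) * G η ≤ N η := by
      rw [hN0] at hsum; linarith
    have hNnn : 0 ≤ N η := by
      have h9 : 0 ≤ 2 * (ε * min (α ^ 2) (1 / M ^ 2)) * G η :=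
        mul_nonneg (mul_nonneg (by norm_num) (mul_nonneg hε.le hmin2)) (hGpos η).le
      linarith
    rw [hFd η, abs_div, abs_neg, abs_of_pos hGp, abs_of_nonneg hNnn, le_div_iff₀ hGp]
    calc 2 * ε * cmin ^ 2 * min (α ^ 3 / L) (1 / M ^ 2) * G η ≤
        2 * (ε * min (α ^ 2) (1 / M ^ 2)) * G η :=
          mul_le_mul_of_nonneg_right hfinal hGp.le
      _ ≤ N η := hNlb
  · -- right of ηstar
    have hterm : ∀ i ∈ Finset.univ,
        (ε * min (α ^ 2) (1 / M ^ 2)) * (c i ^ 2 * lam i * (1 - η * lam i) ^ (2 * t)) ≤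
        c i ^ 2 * lam i ^ 2 * (1 - ηstar * lam i) ^ (2 * t - 1) -
          c i ^ 2 * lam i ^ 2 * (1 - η * lam i) ^ (2 * t - 1) := by
      intro i _
      have key := keyB t ht α (lam i) ε M ηstar η hα (hαl i) hε hεα1 hαM hηs0 hη3
        (by linarith)
      have h8 := mul_le_mul_of_nonneg_left key (mul_nonneg (sq_nonneg (c i)) (hpos i).le)
      calc (ε * min (α ^ 2) (1 / M ^ 2)) * (c i ^ 2 * lam i * (1 - η * lam i) ^ (2 * t))
          = (c i ^ 2 * lam i) *
            ((ε * min (α ^ 2) (1 / M ^ 2)) * (1 - η * lam i) ^ (2 * t)) := by ring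
        _ ≤ (c i ^ 2 * lam i) *
            (lam i * ((1 - ηstar * lam i) ^ (2 * t - 1) - (1 - η * lam i) ^ (2 * t - 1))) := h8
        _ = c i ^ 2 * lam i ^ 2 * (1 - ηstar * lam i) ^ (2 * t - 1) -
            c i ^ 2 * lam i ^ 2 * (1 - η * lam i) ^ (2 * t - 1) := by ring
    have hsum : (ε * min (α ^ 2) (1 / M ^ 2)) * (2 * G η) ≤ N ηstar - N η := by
      have e0 : (2:ℝ) * G η = ∑ i, c i ^ 2 * lam i * (1 - η * lam i) ^ (2 * t) := by
        simp only [hGdef]; ring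
      have e : (ε * min (α ^ 2) (1 / M ^ 2)) * (2 * G η) =
          ∑ i, (ε * min (α ^ 2) (1 / M ^ 2)) *
            (c i ^ 2 * lam i * (1 - η * lam i) ^ (2 * t)) := by
        rw [e0, Finset.mul_sum]
      rw [e]
      have e2 : N ηstar - N η = ∑ i,
          (c i ^ 2 * lam i ^ 2 * (1 - ηstar * lam i) ^ (2 * t - 1) -
           c i ^ 2 * lam i ^ 2 * (1 - η * lam i) ^ (2 * t - 1)) := by
        simp only [hNdef]
        rw [Finset.sum_sub_distrib]
      rw [e2]
      exact Finset.sum_le_sum hterm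
    have hGp := hGpos η
    have hNub : 2 * (ε * min (α ^ 2) (1 / M ^ 2)) * G η ≤ -(N η) := by
      rw [hN0] at hsum; linarith
    have hNnp : N η ≤ 0 := by
      have h9 : 0 ≤ 2 * (ε * min (α ^ 2) (1 / M ^ 2)) * G η :=
        mul_nonneg (mul_nonneg (by norm_num) (mul_nonneg hε.le hmin2)) (hGpos η).le
      linarith
    rw [hFd η, abs_div, abs_neg, abs_of_pos hGp, abs_of_nonpos hNnp, le_div_iff₀ hGp]
    calc 2 * ε * cmin ^ 2 * min (α ^ 3 / L) (1 / M ^ 2) * G η ≤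
        2 * (ε * min (α ^ 2) (1 / M ^ 2)) * G η :=
          mul_le_mul_of_nonneg_right hfinal hGp.le
      _ ≤ -(N η) := hNub
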